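/- Let β: [l] → [k] be a morphism in the augmented simplex category Δ_a and let −1 ≤ i ≤ k. Then there is a unique integer −1 ≤ j ≤ l and a unique pair of morphisms β₁: [j] → [i] and β₂: [l−j−1] → [k−i−1] in Δ_a such that σ_a(β₁, β₂) = β. Moreover, j equals max{ j' ∈ [l] : β(j') ≤ i } if this set is nonempty, and j = −1 otherwise; the maps are given by β₁(r) = β(r) and β₂(r) = β(j+1+r) − i − 1. -/

import Mathlib

open CategoryTheory CategoryTheory.Limits Simplicial Opposite

universe v u

namespace OrdSum

/-- The "ordinal sum" of two monotone maps between finite linear orders. -/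
def ordJoin {m n m' n' : ℕ} (f : Fin m →o Fin m') (g : Fin n →o Fin n') :
    Fin (m + n) →o Fin (m' + n') where
  toFun i :=
    if h : (i : ℕ) < m then Fin.castAdd n' (f ⟨i, h⟩)
    else Fin.natAdd m' (g ⟨(i : ℕ) - m, by omega⟩)
  monotone' := by
    intro i j hij
    have hij' : (i : ℕ) ≤ (j : ℕ) := hij
    dsimp only
    by_cases hi : (i : ℕ) < m <;> by_cases hj : (j : ℕ) < m
    · simp only [dif_pos hi, dif_pos hj, Fin.le_def, Fin.coe_castAdd]
      exact f.monotone (show (⟨(i:ℕ), hi⟩ : Fin m) ≤ ⟨(j:ℕ), hj⟩ from hij')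
    · simp only [dif_pos hi, dif_neg hj, Fin.le_def, Fin.coe_castAdd, Fin.coe_natAdd]
      have := (f ⟨(i:ℕ), hi⟩).isLt
      omega
    · omega
    · simp only [dif_neg hi, dif_neg hj, Fin.le_def, Fin.coe_natAdd]
      have : (⟨(i:ℕ) - m, by omega⟩ : Fin n) ≤ ⟨(j:ℕ) - m, by omega⟩ := by
        simp only [Fin.mk_le_mk]; omega
      have := g.monotone this
      omega

theorem ordJoin_id (m n : ℕ) :
    ordJoin (OrderHom.id (α := Fin m)) (OrderHom.id (α := Fin n)) = OrderHom.id := by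
  ext i
  simp only [ordJoin, OrderHom.coe_mk, OrderHom.id_coe, id_eq]
  by_cases h : (i : ℕ) < m
  · simp [dif_pos h]
  · simp only [dif_neg h, Fin.coe_natAdd]
    omega

theorem ordJoin_comp {m n m' n' m'' n'' : ℕ}
    (f : Fin m →o Fin m') (g : Fin n →o Fin n')
    (f' : Fin m' →o Fin m'') (g' : Fin n' →o Fin n'') :
    ordJoin (f'.comp f) (g'.comp g) = (ordJoin f' g').comp (ordJoin f g) := by
  ext i
  simp only [OrderHom.comp_coe, Function.comp_apply]
  have key : ∀ {a b a' b' : ℕ} (F : Fin a →o Fin a') (G : Fin b →o Fin b') (x : Fin (a + b)),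
      ordJoin F G x = if h : (x : ℕ) < a then Fin.castAdd b' (F ⟨x, h⟩)
        else Fin.natAdd a' (G ⟨(x : ℕ) - a, by omega⟩) := fun _ _ _ => rfl
  rw [key, key, key]
  by_cases h : (i : ℕ) < m
  · have h1 : ((Fin.castAdd n' (f ⟨(i:ℕ), h⟩)) : ℕ) < m' := (f ⟨(i:ℕ), h⟩).isLt
    simp only [dif_pos h, dif_pos h1]
    congr 1
  · have h1 : ¬ ((Fin.natAdd m' (g ⟨(i:ℕ) - m, by omega⟩)) : ℕ) < m' := by
      simp only [Fin.coe_natAdd]; omega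
    simp only [dif_neg h]
    rw [dif_neg h1]
    simp only [OrderHom.comp_coe, Function.comp_apply, Fin.coe_natAdd, Nat.add_right_cancel_iff]
    congr 2
    apply Fin.ext
    simp

/-- The ordinal sum functor `σ : Δ × Δ → Δ`, `([k],[l]) ↦ [k+1+l]`. -/
def ordSum : SimplexCategory × SimplexCategory ⥤ SimplexCategory where
  obj x := SimplexCategory.mk (x.1.len + 1 + x.2.len)
  map {x y} f := SimplexCategory.Hom.mk
    (ordJoin (m := x.1.len + 1) (n := x.2.len + 1) (m' := y.1.len + 1) (n' := y.2.len + 1)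
      f.1.toOrderHom f.2.toOrderHom)
  map_id x := by
    apply SimplexCategory.Hom.ext
    simp only [SimplexCategory.Hom.toOrderHom_mk]
    exact ordJoin_id _ _
  map_comp {x y z} f g := by
    apply SimplexCategory.Hom.ext
    simp only [SimplexCategory.Hom.toOrderHom_mk]
    exact ordJoin_comp _ _ _ _

/-- The augmented simplex category `Δₐ`: the object `⟨n⟩` is the linear order with `n`
elements (so `⟨0⟩` is `[-1] = ∅` and `⟨n+1⟩` is `[n]`); morphisms are monotone maps. -/
@[ext] structure AugSimplex where
  len : ℕ

instance : Category.{0} AugSimplex where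
  Hom a b := Fin a.len →o Fin b.len
  id _ := OrderHom.id
  comp f g := g.comp f

/-- The inclusion `ι : Δ → Δₐ`. -/
def incl : SimplexCategory ⥤ AugSimplex where
  obj x := ⟨x.len + 1⟩
  map f := f.toOrderHom
  map_id _ := rfl
  map_comp _ _ := rfl

/-- The ordinal sum functor `σₐ : Δₐ × Δₐ → Δₐ`. -/
def ordSumAug : AugSimplex × AugSimplex ⥤ AugSimplex where
  obj x := ⟨x.1.len + x.2.len⟩
  map f := ordJoin f.1 f.2
  map_id _ := ordJoin_id _ _
  map_comp _ _ := ordJoin_comp _ _ _ _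

variable {C : Type u} [Category.{v} C]

variable (C) in
/-- Total décalage `σ* : Fun(Δᵒᵖ, C) ⥤ Fun((Δ×Δ)ᵒᵖ, C)`, precomposition with ordinal sum. -/
def decF : (SimplexCategoryᵒᵖ ⥤ C) ⥤ ((SimplexCategory × SimplexCategory)ᵒᵖ ⥤ C) :=
  (Functor.whiskeringLeft _ _ C).obj ordSum.op

variable (C) in
/-- The functor sending a bisimplicial object `Y` to `[k] ↦ Y_{k,−}`. -/
def rowsF : ((SimplexCategory × SimplexCategory)ᵒᵖ ⥤ C) ⥤
    (SimplexCategoryᵒᵖ ⥤ (SimplexCategoryᵒᵖ ⥤ C)) :=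
  (Functor.whiskeringLeft _ _ C).obj
    (prodOpEquiv (C := SimplexCategory) (D := SimplexCategory)).inverse ⋙ Functor.curry

variable (C) in
/-- The functor sending a bisimplicial object `Y` to `[k] ↦ Y_{−,k}`. -/
def colsF : ((SimplexCategory × SimplexCategory)ᵒᵖ ⥤ C) ⥤
    (SimplexCategoryᵒᵖ ⥤ (SimplexCategoryᵒᵖ ⥤ C)) :=
  (Functor.whiskeringLeft _ _ C).obj
    (CategoryTheory.Prod.swap SimplexCategoryᵒᵖ SimplexCategoryᵒᵖ ⋙
      (prodOpEquiv (C := SimplexCategory) (D := SimplexCategory)).inverse) ⋙ Functor.curry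

/-- The simplicial object `Y_{k,−}`. -/
def rowS (Y : (SimplexCategory × SimplexCategory)ᵒᵖ ⥤ C) (k : SimplexCategory) :
    SimplexCategoryᵒᵖ ⥤ C :=
  ((rowsF C).obj Y).obj (op k)

/-- The simplicial object `Y_{−,k}`. -/
def colS (Y : (SimplexCategory × SimplexCategory)ᵒᵖ ⥤ C) (k : SimplexCategory) :
    SimplexCategoryᵒᵖ ⥤ C :=
  ((colsF C).obj Y).obj (op k)

/-- `π₀` of a simplicial object: the coequalizer of the two face maps `X₁ ⇉ X₀`. -/
noncomputable def pi0F [HasCoequalizers C] : (SimplexCategoryᵒᵖ ⥤ C) ⥤ C where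
  obj X := coequalizer (X.map (SimplexCategory.δ (1 : Fin 2)).op)
    (X.map (SimplexCategory.δ (0 : Fin 2)).op)
  map {X Y} f := coequalizer.desc (f.app (op ⦋0⦌) ≫ coequalizer.π _ _) (by
    rw [← Category.assoc, ← Category.assoc, f.naturality, f.naturality,
      Category.assoc, Category.assoc, coequalizer.condition])
  map_id X := by
    apply coequalizer.hom_ext
    simp
  map_comp f g := by
    apply coequalizer.hom_ext
    simp

/-- The canonical quotient map `X₀ → π₀(X)`. -/
noncomputable def pi0π [HasCoequalizers C] (X : SimplexCategoryᵒᵖ ⥤ C) :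
    X.obj (op ⦋0⦌) ⟶ pi0F.obj X :=
  coequalizer.π _ _

variable (C) in
/-- `Y ↦ ([k] ↦ π₀(Y_{k,−}))`. -/
noncomputable def rowsPi0F [HasCoequalizers C] :
    ((SimplexCategory × SimplexCategory)ᵒᵖ ⥤ C) ⥤ (SimplexCategoryᵒᵖ ⥤ C) :=
  rowsF C ⋙ (Functor.whiskeringRight _ _ _).obj pi0F

variable (C) in
/-- `Y ↦ ([k] ↦ π₀(Y_{−,k}))`. -/
noncomputable def colsPi0F [HasCoequalizers C] :
    ((SimplexCategory × SimplexCategory)ᵒᵖ ⥤ C) ⥤ (SimplexCategoryᵒᵖ ⥤ C) :=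
  colsF C ⋙ (Functor.whiskeringRight _ _ _).obj pi0F

variable (C) in
/-- The levelwise tensor `X ⊗ K` of a simplicial object with a simplicial set,
`(X ⊗ K)ₖ = ∐_{Kₖ} Xₖ`, as a functor in `X`. -/
noncomputable def tensorF [HasColimits C] (K : SSet.{v}) :
    (SimplexCategoryᵒᵖ ⥤ C) ⥤ (SimplexCategoryᵒᵖ ⥤ C) where
  obj X :=
    { obj := fun n => ∐ (fun (_ : K.obj n) => X.obj n)
      map := fun {n m} f => Sigma.desc
        (fun s => X.map f ≫ Sigma.ι (fun (_ : K.obj m) => X.obj m) (K.map f s))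
      map_id := fun n => by
        apply Sigma.hom_ext
        intro s
        simp [FunctorToTypes.map_id_apply]
      map_comp := fun {n m l} f g => by
        apply Sigma.hom_ext
        intro s
        simp [FunctorToTypes.map_comp_apply] }
  map {X Y} f :=
    { app := fun n => Limits.Sigma.desc
        (fun (s : K.obj n) => f.app n ≫ Sigma.ι (fun (_ : K.obj n) => Y.obj n) s)
      naturality := fun {n m} g => by
        apply Sigma.hom_ext
        intro s
        simp }
  map_id X := by
    ext n : 2
    simp
  map_comp f g := by
    ext n : 2
    simp

variable (C) in
/-- The canonical projection `X ⊗ K ⟶ X`, induced by `K ⟶ Δ[0]`. -/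
noncomputable def tensorProj [HasColimits C] (K : SSet.{v}) :
    tensorF C K ⟶ 𝟭 (SimplexCategoryᵒᵖ ⥤ C) where
  app X :=
    { app := fun n => Sigma.desc (fun _ => 𝟙 (X.obj n))
      naturality := fun {n m} g => by
        apply Sigma.hom_ext
        intro s
        simp [tensorF] }
  naturality {X Y} f := by
    ext n : 2
    apply Sigma.hom_ext
    intro s
    simp [tensorF]



/-- The splitting index: `sigmaIdx β p` is the number of elements `j` of the source with
`β j < p`; equivalently `j_β + 1` where `j_β` is the largest index landing in the first block. -/
def sigmaIdx {m n : ℕ} (β : Fin m →o Fin n) (p : ℕ) : ℕ :=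
  (Finset.univ.filter fun j : Fin m => ((β j) : ℕ) < p).card

theorem sigmaIdx_le {m n : ℕ} (β : Fin m →o Fin n) (p : ℕ) : sigmaIdx β p ≤ m := by
  classical
  exact le_trans (Finset.card_filter_le _ _) (by simp)

theorem lt_sigmaIdx_iff {m n : ℕ} (β : Fin m →o Fin n) (p : ℕ) (j : Fin m) :
    (j : ℕ) < sigmaIdx β p ↔ ((β j) : ℕ) < p := by
  classical
  constructor
  · intro h
    by_contra hb
    push_neg at hb
    have hsub : (Finset.univ.filter fun j' : Fin m => ((β j') : ℕ) < p) ⊆ Finset.Iio j := by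
      intro x hx
      simp only [Finset.mem_filter, Finset.mem_univ, true_and] at hx
      simp only [Finset.mem_Iio]
      by_contra hxj
      push_neg at hxj
      have hmono := β.monotone hxj
      rw [Fin.le_def] at hmono
      omega
    have hc := Finset.card_le_card hsub
    rw [Fin.card_Iio] at hc
    exact absurd h (by unfold sigmaIdx; omega)
  · intro h
    have hsub : Finset.Iic j ⊆ (Finset.univ.filter fun j' : Fin m => ((β j') : ℕ) < p) := by
      intro x hx
      simp only [Finset.mem_Iic] at hx
      simp only [Finset.mem_filter, Finset.mem_univ, true_and]
      have hmono := β.monotone hx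
      rw [Fin.le_def] at hmono
      omega
    have hc := Finset.card_le_card hsub
    rw [Fin.card_Iic] at hc
    unfold sigmaIdx
    omega

/-- The first component of the splitting of `β` at `p`. -/
def splitFst {m n : ℕ} (β : Fin m →o Fin n) (p : ℕ) : Fin (sigmaIdx β p) →o Fin p where
  toFun r := ⟨((β ⟨r.val, lt_of_lt_of_le r.2 (sigmaIdx_le β p)⟩) : ℕ),
    (lt_sigmaIdx_iff β p _).mp r.2⟩
  monotone' := by
    intro a b hab
    have h := β.monotone (show (⟨a.val, lt_of_lt_of_le a.2 (sigmaIdx_le β p)⟩ : Fin m) ≤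
      ⟨b.val, lt_of_lt_of_le b.2 (sigmaIdx_le β p)⟩ from hab)
    exact h

/-- The second component of the splitting of `β` at `p`. -/
def splitSnd {m n : ℕ} (β : Fin m →o Fin n) (p : ℕ) (hp : p ≤ n) :
    Fin (m - sigmaIdx β p) →o Fin (n - p) where
  toFun r := ⟨((β ⟨sigmaIdx β p + r.val, by have := r.2; omega⟩) : ℕ) - p, by
    have h1 := (β ⟨sigmaIdx β p + r.val, by have := r.2; omega⟩).2
    have h2 : ¬ ((sigmaIdx β p + r.val) < sigmaIdx β p) := by omega
    have h3 := (lt_sigmaIdx_iff β p ⟨sigmaIdx β p + r.val, by have := r.2; omega⟩).not.mp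
      (by simpa using h2)
    simp only [not_lt] at h3
    omega⟩
  monotone' := by
    intro a b hab
    have hav : a.val ≤ b.val := hab
    dsimp only
    simp only [Fin.mk_le_mk]
    apply Nat.sub_le_sub_right
    exact β.monotone (Fin.mk_le_mk.mpr (by omega))


/-- **Construction 2.9 (`betais`).**
Let `β : [l] → [k]` be a morphism in the augmented simplex category (encoded as a monotone map
`β : Fin m →o Fin n` between finite linear orders, with `m = l+1`, `n = k+1` elements) and let
`−1 ≤ i ≤ k` (encoded as `p = i+1 ≤ n`).  Then there is a unique `−1 ≤ j ≤ l` (encoded as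
`q = j+1`, the first component of `t`) and a unique pair of morphisms
`β₁ : [j] → [i]`, `β₂ : [l−j−1] → [k−i−1]` with `σₐ(β₁, β₂) = β`.  Moreover `j` is the
maximum of `{j' | β(j') ≤ i}` if this set is nonempty and `j = −1` otherwise (i.e. `q` is the
successor of the maximum of `{j' | β j' < p}` if that set is nonempty, and `0` otherwise),
`β₁` is given by `r ↦ β(r)`, and `β₂` by `r ↦ β(j+1+r) − i − 1`. -/
theorem exists_unique_ordinal_sum_factorization
    (m n : ℕ) (β : Fin m →o Fin n) (p : ℕ) (hp : p ≤ n) :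
    (∃! t : Σ q : Fin (m + 1), (Fin q.val →o Fin p) × (Fin (m - q.val) →o Fin (n - p)),
      ∀ r : Fin m,
        ((ordJoin t.2.1 t.2.2) ⟨r.val, by have := r.2; have := t.1.2; omega⟩ : ℕ) = (β r : ℕ)) ∧
    (∀ t : Σ q : Fin (m + 1), (Fin q.val →o Fin p) × (Fin (m - q.val) →o Fin (n - p)),
      (∀ r : Fin m,
        ((ordJoin t.2.1 t.2.2) ⟨r.val, by have := r.2; have := t.1.2; omega⟩ : ℕ) = (β r : ℕ)) →
      ((t.1 : ℕ) = (if h : (Finset.univ.filter fun j : Fin m => ((β j) : ℕ) < p).Nonempty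
          then (((Finset.univ.filter fun j : Fin m => ((β j) : ℕ) < p).max' h : ℕ) + 1)
          else 0)) ∧
      (∀ r : Fin (t.1 : ℕ),
        ((t.2.1 r) : ℕ) = (β ⟨r.val, by have := r.2; have := t.1.2; omega⟩ : ℕ)) ∧
      (∀ r : Fin (m - (t.1 : ℕ)),
        ((t.2.2 r) : ℕ) = (β ⟨(t.1 : ℕ) + r.val, by have := r.2; omega⟩ : ℕ) - p)) := by
  classical
  have hq0le : sigmaIdx β p ≤ m := sigmaIdx_le β p
  set q0 := sigmaIdx β p with hq0
  -- characterization of any t satisfying the condition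
  have key : ∀ (t : Σ q : Fin (m + 1), (Fin q.val →o Fin p) × (Fin (m - q.val) →o Fin (n - p))),
      (∀ r : Fin m,
        ((ordJoin t.2.1 t.2.2) ⟨r.val, by have := r.2; have := t.1.2; omega⟩ : ℕ) = (β r : ℕ)) →
      ((t.1 : ℕ) = q0 ∧
      (∀ r : Fin m, ∀ h : r.val < (t.1 : ℕ), ((t.2.1 ⟨r.val, h⟩ : Fin p) : ℕ) = (β r : ℕ)) ∧
      (∀ r : Fin m, ∀ h : (t.1 : ℕ) ≤ r.val,
        p + ((t.2.2 ⟨r.val - (t.1 : ℕ), by have := r.2; omega⟩ : Fin (n - p)) : ℕ)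
          = (β r : ℕ))) := by
    rintro ⟨⟨q, hq⟩, f, g⟩ hcond
    have hval : ∀ r : Fin m,
        (if h : r.val < q then ((f ⟨r.val, h⟩ : Fin p) : ℕ)
         else p + ((g ⟨r.val - q, by have := r.2; exact show r.val - q < m - q by omega⟩ :
           Fin (n - p)) : ℕ)) = (β r : ℕ) := by
      intro r
      have hc := hcond r
      simp only [ordJoin, OrderHom.coe_mk] at hc
      by_cases h : r.val < q
      · rw [dif_pos h]
        rw [dif_pos (show ((⟨r.val, by omega⟩ : Fin (q + (m - q))) : ℕ) < q from h)] at hc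
        simpa using hc
      · rw [dif_neg h]
        rw [dif_neg (show ¬ ((⟨r.val, by omega⟩ : Fin (q + (m - q))) : ℕ) < q from h)] at hc
        simpa using hc
    have hlt : ∀ r : Fin m, r.val < q ↔ ((β r) : ℕ) < p := by
      intro r
      constructor
      · intro h
        have hv := hval r
        rw [dif_pos h] at hv
        have := (f ⟨r.val, h⟩).2
        omega
      · intro h
        by_contra hc
        have hv := hval r
        rw [dif_neg hc] at hv
        omega
    have hqq0 : q = q0 := by
      by_contra hne
      rcases Nat.lt_or_ge q q0 with hlt' | hge
      · have hr : q < m := lt_of_lt_of_le hlt' hq0le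
        have h1 : ((β ⟨q, hr⟩) : ℕ) < p := (lt_sigmaIdx_iff β p ⟨q, hr⟩).mp hlt'
        exact Nat.lt_irrefl q ((hlt ⟨q, hr⟩).mpr h1)
      · have hlt'' : q0 < q := lt_of_le_of_ne hge (Ne.symm hne)
        have hr : q0 < m := by omega
        have h1 : ((β ⟨q0, hr⟩) : ℕ) < p := (hlt ⟨q0, hr⟩).mp hlt''
        exact Nat.lt_irrefl q0 ((lt_sigmaIdx_iff β p ⟨q0, hr⟩).mpr h1)
    refine ⟨hqq0, ?_, ?_⟩
    · intro r h
      have hv := hval r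
      rw [dif_pos h] at hv
      exact hv
    · intro r h
      have h' : q ≤ r.val := h
      have hv := hval r
      rw [dif_neg (by omega : ¬ r.val < q)] at hv
      exact hv
  -- the dite characterization of q0
  have hdite : q0 = (if h : (Finset.univ.filter fun j : Fin m => ((β j) : ℕ) < p).Nonempty
      then (((Finset.univ.filter fun j : Fin m => ((β j) : ℕ) < p).max' h : ℕ) + 1)
      else 0) := by
    split_ifs with h
    · set S := Finset.univ.filter fun j : Fin m => ((β j) : ℕ) < p with hS
      set jm := S.max' h with hjm
      have hmem : jm ∈ S := S.max'_mem h
      have hblt : ((β jm) : ℕ) < p := by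
        rw [hS] at hmem
        simpa using hmem
      have h1 : (jm : ℕ) < q0 := (lt_sigmaIdx_iff β p jm).mpr hblt
      have h2 : q0 ≤ (jm : ℕ) + 1 := by
        by_contra hc
        push_neg at hc
        have hr : (jm : ℕ) + 1 < m := by omega
        have h3 : ((β ⟨(jm : ℕ) + 1, hr⟩) : ℕ) < p :=
          (lt_sigmaIdx_iff β p ⟨(jm : ℕ) + 1, hr⟩).mp (by simpa using hc)
        have h4 : (⟨(jm : ℕ) + 1, hr⟩ : Fin m) ∈ S := by
          rw [hS]; simp [h3]
        have h5 := S.le_max' _ h4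
        rw [← hjm] at h5
        rw [Fin.le_def] at h5
        simp at h5
      omega
    · by_contra hc
      have hq0pos : 0 < q0 := Nat.pos_of_ne_zero hc
      have hr : (0 : ℕ) < m := by omega
      have h1 : ((β ⟨0, hr⟩) : ℕ) < p :=
        (lt_sigmaIdx_iff β p ⟨0, hr⟩).mp (by simpa using hq0pos)
      exact h ⟨⟨0, hr⟩, by simp [h1]⟩
  -- the canonical witness
  have hq0m : q0 < m + 1 := by omega
  have bcongr : ∀ (a b : Fin m), a.val = b.val → ((β a) : ℕ) = ((β b) : ℕ) := by
    intro a b hab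
    rw [Fin.ext hab]
  constructor
  · refine ⟨⟨⟨q0, hq0m⟩, splitFst β p, splitSnd β p hp⟩, ?_, ?_⟩
    · intro r
      have hrm : r.val < m := r.2
      simp only [ordJoin, OrderHom.coe_mk]
      by_cases h : r.val < q0
      · rw [dif_pos (show ((⟨r.val, by omega⟩ : Fin (q0 + (m - q0))) : ℕ) < q0 from h)]
        rfl
      · rw [dif_neg (show ¬ ((⟨r.val, by omega⟩ : Fin (q0 + (m - q0))) : ℕ) < q0 from h)]
        have hle : q0 ≤ r.val := not_lt.mp h
        have hge : p ≤ ((β r) : ℕ) := by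
          by_contra hb
          push_neg at hb
          exact h ((lt_sigmaIdx_iff β p r).mpr hb)
        have hpf : sigmaIdx β p + (r.val - q0) < m := by omega
        show p + (((β ⟨sigmaIdx β p + (r.val - q0), hpf⟩ : Fin n) : ℕ) - p) = ((β r) : ℕ)
        have hb := bcongr ⟨sigmaIdx β p + (r.val - q0), hpf⟩ r
          (by show sigmaIdx β p + (r.val - q0) = r.val; omega)
        omega
    · rintro ⟨⟨q, hq⟩, f, g⟩ hcond
      obtain ⟨h1, h2, h3⟩ := key ⟨⟨q, hq⟩, f, g⟩ hcond
      simp only at h1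
      subst h1
      have hf : f = splitFst β p := by
        ext r
        have hrm : r.val < m := lt_of_lt_of_le r.2 hq0le
        exact h2 ⟨r.val, hrm⟩ r.2
      have hg : g = splitSnd β p hp := by
        ext r
        have hr2 : r.val < m - q0 := r.2
        have hrm : q0 + r.val < m := by omega
        have h3' := h3 ⟨q0 + r.val, hrm⟩ (Nat.le_add_right q0 r.val)
        have hbd : (q0 + r.val) - q0 < m - q0 := by omega
        have harg : (⟨(q0 + r.val) - q0, hbd⟩ : Fin (m - q0)) = r :=
          Fin.ext (show (q0 + r.val) - q0 = r.val by omega)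
        have hs : ((g ⟨(q0 + r.val) - q0, hbd⟩ : Fin (n - p)) : ℕ) = ((g r) : ℕ) := by
          rw [harg]
        have h3'' : p + ((g r) : ℕ) = ((β ⟨q0 + r.val, hrm⟩) : ℕ) := by
          rw [← hs]; exact h3'
        have hpf : sigmaIdx β p + r.val < m := by omega
        show ((g r) : ℕ) = (((β ⟨sigmaIdx β p + r.val, hpf⟩ : Fin n) : ℕ) - p)
        have hb := bcongr ⟨sigmaIdx β p + r.val, hpf⟩ ⟨q0 + r.val, hrm⟩
          (by show sigmaIdx β p + r.val = q0 + r.val; omega)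
        have hvp : (β ⟨q0 + r.val, hrm⟩ : ℕ) ≥ p := by
          by_contra hb2
          push_neg at hb2
          have := (lt_sigmaIdx_iff β p ⟨q0 + r.val, hrm⟩).mpr hb2
          have h4 : q0 + r.val < q0 := by
            have h5 : ((⟨q0 + r.val, hrm⟩ : Fin m) : ℕ) = q0 + r.val := rfl
            omega
          omega
        omega
      subst hf
      subst hg
      rfl
  · intro t hcond
    obtain ⟨h1, h2, h3⟩ := key t hcond
    refine ⟨h1.trans hdite, ?_, ?_⟩
    · intro r
      have hlem : (t.1 : ℕ) < m + 1 := t.1.2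
      have hrm : r.val < m := by have := r.2; omega
      exact h2 ⟨r.val, hrm⟩ r.2
    · intro r
      have hr2 : r.val < m - (t.1 : ℕ) := r.2
      have hlem : (t.1 : ℕ) < m + 1 := t.1.2
      have hrm : (t.1 : ℕ) + r.val < m := by omega
      have h3' := h3 ⟨(t.1 : ℕ) + r.val, hrm⟩ (Nat.le_add_right _ _)
      have hbd : (t.1 : ℕ) + r.val - (t.1 : ℕ) < m - (t.1 : ℕ) := by omega
      have harg : (⟨(t.1 : ℕ) + r.val - (t.1 : ℕ), hbd⟩ : Fin (m - (t.1 : ℕ))) = r :=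
        Fin.ext (show (t.1 : ℕ) + r.val - (t.1 : ℕ) = r.val by omega)
      have hs : ((t.2.2 ⟨(t.1 : ℕ) + r.val - (t.1 : ℕ), hbd⟩ : Fin (n - p)) : ℕ)
          = ((t.2.2 r) : ℕ) := by
        rw [harg]
      have h3'' : p + ((t.2.2 r) : ℕ) = ((β ⟨(t.1 : ℕ) + r.val, hrm⟩) : ℕ) := by
        rw [← hs]; exact h3'
      show ((t.2.2 r) : ℕ) = ((β ⟨(t.1 : ℕ) + r.val, hrm⟩) : ℕ) - p
      omega
end OrdSum
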